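/- (Validity of the relaxed lifted inequality) Let g : 2^V → ℝ be nondecreasing, S ⊆ V, and j_1,…,j_r an enumeration of V \ S. Define δ̄_t := g(S ∪ {j_1,…,j_t}) − g(S). Then for every X ⊆ V: g(X) ≤ g(S) + Σ_{t : j_t ∈ X} δ̄_t. -/

import Mathlib

/-- validity of the relaxed lifted inequality
g(X) ≤ g(S) + Σ_{t : j_t ∈ X} (g(S ∪ {j_1,…,j_t}) − g(S)). -/
theorem relaxed_lifted_cut_valid {V : Type*} [Fintype V] [DecidableEq V]
    (g : Finset V → ℝ) (hmono : ∀ X Y : Finset V, X ⊆ Y → g X ≤ g Y)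
    (S : Finset V) (r : ℕ) (j : Fin r → V)
    (hinj : Function.Injective j) (hjS : ∀ t, j t ∉ S)
    (hcover : ∀ v : V, v ∉ S → ∃ t, j t = v) :
    ∀ X : Finset V,
      g X ≤ g S + ∑ t ∈ Finset.univ.filter (fun t => j t ∈ X),
        (g (S ∪ (Finset.univ.filter (fun i : Fin r => i ≤ t)).image j) - g S) := by
  intro X
  set T := Finset.univ.filter (fun t => j t ∈ X) with hT
  by_cases hTe : T.Nonempty
  · set t0 := T.max' hTe with ht0def
    have ht0 : t0 ∈ T := T.max'_mem hTe
    have hsub : X ⊆ S ∪ (Finset.univ.filter (fun i : Fin r => i ≤ t0)).image j := by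
      intro v hv
      by_cases hvS : v ∈ S
      · exact Finset.mem_union_left _ hvS
      · obtain ⟨t, rfl⟩ := hcover v hvS
        have htT : t ∈ T := by simp [hT, hv]
        exact Finset.mem_union_right _
          (Finset.mem_image_of_mem j (by simp only [Finset.mem_filter, Finset.mem_univ, true_and]; exact T.le_max' t htT))
    have h1 : g X ≤ g (S ∪ (Finset.univ.filter (fun i : Fin r => i ≤ t0)).image j) :=
      hmono _ _ hsub
    have h2 : g (S ∪ (Finset.univ.filter (fun i : Fin r => i ≤ t0)).image j) - g S ≤
        ∑ t ∈ T, (g (S ∪ (Finset.univ.filter (fun i : Fin r => i ≤ t)).image j) - g S) := by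
      refine Finset.single_le_sum (f := fun t => g (S ∪ (Finset.univ.filter (fun i : Fin r => i ≤ t)).image j) - g S) (fun t _ => ?_) ht0
      have := hmono S (S ∪ (Finset.univ.filter (fun i : Fin r => i ≤ t)).image j)
        Finset.subset_union_left
      linarith
    linarith
  · have hsub : X ⊆ S := by
      intro v hv
      by_contra hvS
      obtain ⟨t, rfl⟩ := hcover v hvS
      exact hTe ⟨t, by simp [hT, hv]⟩
    have h := hmono X S hsub
    rw [Finset.not_nonempty_iff_eq_empty] at hTe
    rw [hTe]
    simpa using h
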